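/- M is stable under wide pullbacks: given a family of morphisms (f_i : A_i → B) indexed by a set I and a wide pullback cone (pr_i : P → A_i), if f_i ∈ M for all i ∈ I \ {j}, then the projection pr_j : P → A_j is in M. -/

import Mathlib

open CategoryTheory CategoryTheory.Limits

universe v u

/-- An (E,M)-factorization system on a category. -/
structure FactorizationSystem (K : Type u) [Category.{v} K] : Type (max u (v+1)) where
  E : MorphismProperty K
  M : MorphismProperty K
  E_comp_iso : ∀ {X Y Z : K} (e : X ⟶ Y) (i : Y ⟶ Z), IsIso i → E e → E (e ≫ i)
  iso_comp_E : ∀ {X Y Z : K} (i : X ⟶ Y) (e : Y ⟶ Z), IsIso i → E e → E (i ≫ e)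
  M_comp_iso : ∀ {X Y Z : K} (m : X ⟶ Y) (i : Y ⟶ Z), IsIso i → M m → M (m ≫ i)
  iso_comp_M : ∀ {X Y Z : K} (i : X ⟶ Y) (m : Y ⟶ Z), IsIso i → M m → M (i ≫ m)
  factor : ∀ {X Y : K} (f : X ⟶ Y),
      ∃ (I : K) (e : X ⟶ I) (m : I ⟶ Y), E e ∧ M m ∧ e ≫ m = f
  diagonal : ∀ {A B X Y : K} (e : A ⟶ B) (f : A ⟶ X) (g : B ⟶ Y) (m : X ⟶ Y),
      E e → M m → e ≫ g = f ≫ m → ∃! d : B ⟶ X, e ≫ d = f ∧ d ≫ m = g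

/-- An object is M-minimal if every M-morphism into it is an isomorphism. -/
def MMinimal {K : Type u} [Category.{v} K] (fs : FactorizationSystem K) (C : K) : Prop :=
  ∀ {D : K} (h : D ⟶ C), fs.M h → IsIso h


/-- M is stable under wide pullbacks: if all the f_i with i ≠ j lie in M, then the
wide-pullback projection pr_j lies in M. -/
theorem M_wide_pullback_stable {K : Type u} [Category.{v} K] (fs : FactorizationSystem K)
    {I : Type v} {B : K} (A : I → K) (f : ∀ i, A i ⟶ B)
    (c : Cone (WidePullbackShape.wideCospan B A f)) (hc : IsLimit c) (j : I)
    (hf : ∀ i, i ≠ j → fs.M (f i)) :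
    fs.M (c.π.app (Option.some j)) := by
  obtain ⟨I₀, e, m, hE, hM, hem⟩ := fs.factor (c.π.app (Option.some j))
  have wterm : ∀ i, c.π.app (some i) ≫ f i = c.π.app none := fun i =>
    c.w (WidePullbackShape.Hom.term i)
  have key : ∀ i, i ≠ j → ∃! d : I₀ ⟶ A i,
      e ≫ d = c.π.app (some i) ∧ d ≫ f i = m ≫ f j := by
    intro i hi
    apply fs.diagonal e (c.π.app (some i)) (m ≫ f j) (f i) hE (hf i hi)
    erw [← Category.assoc, hem, wterm j, wterm i]
  classical
  let leg : ∀ i : I, I₀ ⟶ A i := fun i =>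
    if h : i = j then m ≫ eqToHom (congrArg A h).symm else (key i h).exists.choose
  have leg_e : ∀ i, e ≫ leg i = c.π.app (some i) := by
    intro i
    by_cases h : i = j
    · subst h; simp only [leg, dif_pos rfl, eqToHom_refl, Category.comp_id, hem]
      rw [← hem]; exact congrArg (e ≫ ·) (Category.comp_id m)
    · simpa only [leg, dif_neg h] using ((key i h).exists.choose_spec).1
  have leg_w : ∀ i, leg i ≫ f i = m ≫ f j := by
    intro i
    by_cases h : i = j
    · subst h; simp [leg]
      exact congrArg (m ≫ ·) (Category.id_comp (f i))
    · simpa only [leg, dif_neg h] using ((key i h).exists.choose_spec).2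
  let s : Cone (WidePullbackShape.wideCospan B A f) :=
    WidePullbackShape.mkCone (m ≫ f j) leg leg_w
  let r : I₀ ⟶ c.pt := hc.lift s
  have r_leg : ∀ i, r ≫ c.π.app (some i) = leg i := fun i => hc.fac s (some i)
  have er : e ≫ r = 𝟙 c.pt := by
    apply hc.hom_ext
    intro o
    match o with
    | none =>
        have hlj : leg j = m := by simp [leg]; exact Category.comp_id m
        simp only [← wterm j, Category.assoc]
        have h3 : (e ≫ r) ≫ c.π.app (some j) = c.π.app (some j) := by
          rw [Category.assoc, r_leg j, hlj, hem]
        exact (Category.assoc _ _ _).symm.trans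
          ((congrArg (· ≫ f j) h3).trans (Category.id_comp _).symm)
    | some i =>
        simp only [Category.assoc]
        erw [r_leg i, leg_e i]
        simp
  have rjm : r ≫ c.π.app (some j) = m := by
    rw [r_leg j]; simp [leg]; exact Category.comp_id m
  have re : r ≫ e = 𝟙 I₀ := by
    have huniq := (fs.diagonal e e m m hE hM rfl)
    have h1 : e ≫ (r ≫ e) = e ∧ (r ≫ e) ≫ m = m := by
      constructor
      · rw [← Category.assoc, er]; simp
      · rw [Category.assoc, hem, rjm]
    have h2 : e ≫ (𝟙 I₀) = e ∧ (𝟙 I₀) ≫ m = m := by simp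
    exact (huniq.unique h1 h2)
  have : IsIso e := ⟨r, er, re⟩
  rw [← hem]
  exact fs.iso_comp_M e m this hM
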